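/- arXiv:2002.11715 — 5 statements merged into one kernel-verified Lean document; each statement's English description precedes it below -/
import Mathlib

section
/- Let A be a symmetric tensor of order m and dimension n over ℂ, and let D be an invertible diagonal matrix with d₁₁ = 1 satisfying D^{-(m-1)} A D = A. If the support hypergraph of A is connected (A is weakly irreducible), then D^m = I. -/
open Matrix Finset

/-- For a symmetric weakly irreducible tensor `A` of order `m` and dimension `n` over `ℂ`,
any invertible diagonal matrix `D` with `D₁₁ = 1` satisfying `D^{-(m-1)} A D = A`
satisfies `D^m = I`. -/
theorem diag_pow_eq_one_of_symmetric_weakly_irreducible (m n : ℕ) (hm : 2 ≤ m) (hn : 1 ≤ n)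
    (A : (Fin m → Fin n) → ℂ)
    (hsym : ∀ (f : Fin m → Fin n) (σ : Equiv.Perm (Fin m)), A (f ∘ σ) = A f)
    (hirr : ∀ i j : Fin n, Relation.ReflTransGen
      (fun a b => a ≠ b ∧ ∃ f, A f ≠ 0 ∧ a ∈ Set.range f ∧ b ∈ Set.range f) i j)
    (D : Matrix (Fin n) (Fin n) ℂ)
    (hdiag : D.IsDiag) (hunit : IsUnit D.det)
    (hnorm : D ⟨0, by omega⟩ ⟨0, by omega⟩ = 1)
    (hact : ∀ f : Fin m → Fin n,
      (D (f ⟨0, by omega⟩) (f ⟨0, by omega⟩))⁻¹ ^ (m - 1) * A f *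
        ∏ t ∈ Finset.univ.erase (⟨0, by omega⟩ : Fin m), D (f t) (f t) = A f) :
    D ^ m = 1 := by
  set d : Fin n → ℂ := fun i => D i i with hd
  have hD : D = Matrix.diagonal d := by
    ext i j
    by_cases h : i = j
    · subst h; simp [Matrix.diagonal, d]
    · simp [Matrix.diagonal, h, hdiag h]
  have dne : ∀ i, d i ≠ 0 := by
    intro i
    have hdet : D.det = ∏ i, d i := by rw [hD, Matrix.det_diagonal]
    rw [hdet] at hunit
    have h := hunit.ne_zero
    rw [Finset.prod_ne_zero_iff] at h
    exact h i (Finset.mem_univ i)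
  set z : Fin m := ⟨0, by omega⟩ with hz
  have key : ∀ f : Fin m → Fin n, A f ≠ 0 → ∀ i, i ∈ Set.range f →
      d i ^ m = ∏ t, d (f t) := by
    intro f hf i hi
    obtain ⟨t, ht⟩ := hi
    set σ : Equiv.Perm (Fin m) := Equiv.swap z t with hσ
    have h1 := hact (f ∘ σ)
    rw [hsym f σ] at h1
    have hσ0 : (f ∘ σ) z = i := by
      simp only [Function.comp, σ, Equiv.swap_apply_left, ht]
    rw [hσ0] at h1
    rw [inv_pow] at h1
    have h2 : A f * ((d i ^ (m - 1))⁻¹ * ∏ s ∈ Finset.univ.erase z, d ((f ∘ σ) s))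
        = A f * 1 := by rw [mul_one]; linear_combination h1
    have h2' := mul_left_cancel₀ hf h2
    have h3 : ∏ s ∈ Finset.univ.erase z, d ((f ∘ σ) s) = d i ^ (m - 1) :=
      ((inv_mul_eq_one₀ (pow_ne_zero _ (dne i))).mp h2').symm
    have h4 : ∏ s, d ((f ∘ σ) s) = d i ^ m := by
      rw [← Finset.mul_prod_erase Finset.univ _ (Finset.mem_univ z), hσ0, h3]
      rw [← pow_succ']
      congr 1
      omega
    rw [← h4]
    simpa [Function.comp] using Equiv.prod_comp σ (fun s => d (f s))
  have step : ∀ a b : Fin n,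
      (a ≠ b ∧ ∃ f, A f ≠ 0 ∧ a ∈ Set.range f ∧ b ∈ Set.range f) → d a ^ m = d b ^ m := by
    rintro a b ⟨-, f, hf, ha, hb⟩
    rw [key f hf a ha, key f hf b hb]
  have hdm : ∀ i : Fin n, d i ^ m = 1 := by
    intro i
    have h0 : d ⟨0, by omega⟩ ^ m = 1 := by
      rw [show d ⟨0, by omega⟩ = 1 from hnorm, one_pow]
    have : d i ^ m = d ⟨0, by omega⟩ ^ m := by
      refine Relation.ReflTransGen.head_induction_on (hirr i ⟨0, by omega⟩) rfl ?_
      intro a c hac _ hcd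
      rw [step a c hac, hcd]
    rw [this, h0]
  rw [hD, Matrix.diagonal_pow]
  have hdm1 : d ^ m = 1 := by
    funext i
    simpa [Pi.pow_apply] using hdm i
  rw [hdm1]; exact Matrix.diagonal_one
end

section
/- Let G₁ and G₂ be nontrivial connected m-uniform hypergraphs and G = G₁(u) ⊙ G₂(u) their coalescence at a vertex u. Then s(G) = s(G₁) · s(G₂), where for a connected m-uniform hypergraph H on n_H vertices with incidence matrix over ℤ/mℤ having invariant divisors d₁,...,d_r, the stabilizing index is s(H) = m^{n_H − 1 − r} ∏_{i=1}^r dᵢ. -/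
open Matrix

/-- An `m`-uniform hypergraph on the vertex type `V`. -/
structure HG (m : ℕ) (V : Type) where
  edges : Finset (Finset V)
  uniform : ∀ e ∈ edges, e.card = m

namespace HG

variable {m : ℕ} {V : Type}

/-- Two vertices are adjacent if they are distinct and some edge contains both. -/
def adj (G : HG m V) (u v : V) : Prop :=
  u ≠ v ∧ ∃ e ∈ G.edges, u ∈ e ∧ v ∈ e

/-- A hypergraph is connected if every two vertices are joined by a walk. -/
def Connected (G : HG m V) : Prop :=
  ∀ u v : V, Relation.ReflTransGen G.adj u v

/-- The incidence matrix of `G` over `ZMod m`: rows are edges, columns are vertices,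
entry `1` iff the vertex lies in the edge. -/
def inc [DecidableEq V] (G : HG m V) : Matrix {e // e ∈ G.edges} V (ZMod m) :=
  Matrix.of fun e v => if v ∈ e.1 then 1 else 0

/-- The stabilizing index of `G` with respect to a base vertex `v₀`: the number of
solutions `x` of `In(G)·x = 0` over `ZMod m` with `x v₀ = 0`. -/
noncomputable def stabIndex [DecidableEq V] [Fintype V] (G : HG m V) (v₀ : V) : ℕ :=
  Nat.card {x : V → ZMod m // G.inc.mulVec x = 0 ∧ x v₀ = 0}

/-- The cyclic index of `G`: the largest divisor `ℓ` of `m` such that `G` has an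
`(m,ℓ)`-coloring, i.e. a vertex labelling whose sum on each edge is `m/ℓ` mod `m`. -/
noncomputable def cyclicIndex (G : HG m V) : ℕ :=
  sSup {ℓ : ℕ | ℓ ∣ m ∧ ∃ x : V → ZMod m, ∀ e ∈ G.edges, ∑ v ∈ e, x v = ((m / ℓ : ℕ) : ZMod m)}

end HG

/-- The vertex identification map used in the coalescence. -/
def coalMap {V₁ V₂ : Type} [DecidableEq V₂] (u₁ : V₁) (u₂ : V₂) :
    V₂ → V₁ ⊕ {v : V₂ // v ≠ u₂} :=
  fun v => if h : v = u₂ then Sum.inl u₁ else Sum.inr ⟨v, h⟩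

lemma coalMap_injective {V₁ V₂ : Type} [DecidableEq V₂] (u₁ : V₁) (u₂ : V₂) :
    Function.Injective (coalMap u₁ u₂) := by
  intro a b hab
  unfold coalMap at hab
  split_ifs at hab <;> simp_all

/-- The coalescence `G₁(u₁) ⊙ G₂(u₂)`: the vertex `u₁` of `G₁` is identified with the
vertex `u₂` of `G₂`, and the edge set is the disjoint union of the two edge sets. -/
def coalescence {m : ℕ} {V₁ V₂ : Type} [DecidableEq V₁] [DecidableEq V₂]
    (G₁ : HG m V₁) (G₂ : HG m V₂) (u₁ : V₁) (u₂ : V₂) :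
    HG m (V₁ ⊕ {v : V₂ // v ≠ u₂}) where
  edges := G₁.edges.image (Finset.image Sum.inl) ∪
    G₂.edges.image (Finset.image (coalMap u₁ u₂))
  uniform := by
    intro e he
    simp only [Finset.mem_union, Finset.mem_image] at he
    rcases he with ⟨f, hf, rfl⟩ | ⟨f, hf, rfl⟩
    · rw [Finset.card_image_of_injective _ Sum.inl_injective]
      exact G₁.uniform f hf
    · rw [Finset.card_image_of_injective _ (coalMap_injective u₁ u₂)]
      exact G₂.uniform f hf


open Matrix

section Aux

variable {m : ℕ} {V : Type}

/-- Kernel condition spelled out edge by edge. -/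
lemma HG.mulVec_zero_iff [DecidableEq V] [Fintype V] (G : HG m V) (x : V → ZMod m) :
    G.inc.mulVec x = 0 ↔ ∀ e ∈ G.edges, ∑ v ∈ e, x v = 0 := by
  have key : ∀ (e : Finset V), (∑ v, (if v ∈ e then (1 : ZMod m) else 0) * x v) = ∑ v ∈ e, x v := by
    intro e
    simp only [ite_mul, one_mul, zero_mul]
    rw [Finset.sum_ite_mem, Finset.univ_inter]
  constructor
  · intro h e he
    have := congrFun h ⟨e, he⟩
    simpa [Matrix.mulVec, dotProduct, HG.inc, key e] using this
  · intro h
    funext e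
    simpa [Matrix.mulVec, dotProduct, HG.inc, key e.1] using h e.1 e.2

/-- The solution group of the incidence system. -/
def HG.sol [DecidableEq V] [Fintype V] (G : HG m V) : AddSubgroup (V → ZMod m) where
  carrier := {x | G.inc.mulVec x = 0}
  add_mem' := by
    intro a b ha hb
    simp only [Set.mem_setOf_eq, Matrix.mulVec_add] at *
    rw [ha, hb, add_zero]
  zero_mem' := by simp [Set.mem_setOf_eq, Matrix.mulVec_zero]
  neg_mem' := by
    intro a ha
    simp only [Set.mem_setOf_eq, Matrix.mulVec_neg] at *
    rw [ha, neg_zero]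

lemma HG.const_mem_sol [DecidableEq V] [Fintype V] (G : HG m V) (c : ZMod m) :
    (fun _ => c) ∈ G.sol := by
  show G.inc.mulVec _ = 0
  rw [G.mulVec_zero_iff]
  intro e he
  rw [Finset.sum_const, G.uniform e he, nsmul_eq_mul, ZMod.natCast_self, zero_mul]

lemma card_ker_mul {B : Type*} [AddGroup B] {G : Type*} [AddGroup G] [Finite G]
    (f : G →+ B) (hf : Function.Surjective f) :
    Nat.card f.ker * Nat.card B = Nat.card G := by
  have h1 : Nat.card (G ⧸ f.ker) = Nat.card B :=
    Nat.card_congr (QuotientAddGroup.quotientKerEquivOfSurjective f hf).toEquiv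
  rw [AddSubgroup.card_eq_card_quotient_mul_card_addSubgroup f.ker, h1, Nat.mul_comm]

lemma HG.stabIndex_mul [NeZero m] [DecidableEq V] [Fintype V] (G : HG m V) (v : V) :
    G.stabIndex v * m = Nat.card G.sol := by
  let ev : G.sol →+ ZMod m := (Pi.evalAddMonoidHom (fun _ => ZMod m) v).comp G.sol.subtype
  have hsurj : Function.Surjective ev := fun c => ⟨⟨fun _ => c, G.const_mem_sol c⟩, rfl⟩
  have h := card_ker_mul ev hsurj
  have hcard : Nat.card (ZMod m) = m := Nat.card_eq_fintype_card.trans (ZMod.card m)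
  have he : G.stabIndex v = Nat.card ev.ker := by
    unfold HG.stabIndex
    exact Nat.card_congr
      ⟨fun x => ⟨⟨x.1, x.2.1⟩, x.2.2⟩, fun y => ⟨y.1.1, y.1.2, y.2⟩,
        fun x => rfl, fun y => rfl⟩
  rw [hcard] at h
  rw [he, h]

end Aux

section Coal

variable {m : ℕ} {V₁ V₂ : Type} [DecidableEq V₁] [Fintype V₁] [DecidableEq V₂] [Fintype V₂]
  (G₁ : HG m V₁) (G₂ : HG m V₂) (u₁ : V₁) (u₂ : V₂)

lemma coal_sol_iff (x : (V₁ ⊕ {v : V₂ // v ≠ u₂}) → ZMod m) :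
    x ∈ (coalescence G₁ G₂ u₁ u₂).sol ↔
      (x ∘ Sum.inl) ∈ G₁.sol ∧ (x ∘ coalMap u₁ u₂) ∈ G₂.sol := by
  show (coalescence G₁ G₂ u₁ u₂).inc.mulVec x = 0 ↔
    G₁.inc.mulVec (x ∘ Sum.inl) = 0 ∧ G₂.inc.mulVec (x ∘ coalMap u₁ u₂) = 0
  rw [HG.mulVec_zero_iff, HG.mulVec_zero_iff, HG.mulVec_zero_iff]
  have s1 : ∀ f : Finset V₁, ∑ w ∈ f.image Sum.inl, x w = ∑ v ∈ f, x (Sum.inl v) := by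
    intro f
    exact Finset.sum_image (fun a _ b _ h => Sum.inl_injective h)
  have s2 : ∀ f : Finset V₂, ∑ w ∈ f.image (coalMap u₁ u₂), x w
      = ∑ v ∈ f, x (coalMap u₁ u₂ v) := by
    intro f
    exact Finset.sum_image (fun a _ b _ h => coalMap_injective u₁ u₂ h)
  constructor
  · intro h
    constructor
    · intro e he
      have := h (e.image Sum.inl) (by
        simp only [coalescence, Finset.mem_union, Finset.mem_image]
        exact Or.inl ⟨e, he, rfl⟩)
      rwa [s1] at this
    · intro e he
      have := h (e.image (coalMap u₁ u₂)) (by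
        simp only [coalescence, Finset.mem_union, Finset.mem_image]
        exact Or.inr ⟨e, he, rfl⟩)
      rwa [s2] at this
  · rintro ⟨h1, h2⟩ e he
    simp only [coalescence, Finset.mem_union, Finset.mem_image] at he
    rcases he with ⟨f, hf, rfl⟩ | ⟨f, hf, rfl⟩
    · rw [s1]; exact h1 f hf
    · rw [s2]; exact h2 f hf

/-- Glue two compatible solutions. -/
def glue (x₁ : V₁ → ZMod m) (x₂ : V₂ → ZMod m) : (V₁ ⊕ {v : V₂ // v ≠ u₂}) → ZMod m :=
  Sum.elim x₁ (fun v => x₂ v.1)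

omit [DecidableEq V₁] [Fintype V₁] [DecidableEq V₂] [Fintype V₂] in
lemma glue_comp_inl (x₁ : V₁ → ZMod m) (x₂ : V₂ → ZMod m) :
    glue u₂ x₁ x₂ ∘ Sum.inl = x₁ := rfl

omit [DecidableEq V₁] [Fintype V₁] [Fintype V₂] in
lemma glue_comp_coalMap (x₁ : V₁ → ZMod m) (x₂ : V₂ → ZMod m) (hc : x₁ u₁ = x₂ u₂) :
    glue u₂ x₁ x₂ ∘ coalMap u₁ u₂ = x₂ := by
  funext v
  by_cases h : v = u₂
  · subst h
    simp [glue, coalMap, hc]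
  · simp [glue, coalMap, h]

noncomputable def coalEquiv :
    (coalescence G₁ G₂ u₁ u₂).sol ≃
      {p : G₁.sol × G₂.sol // (p.1 : V₁ → ZMod m) u₁ = (p.2 : V₂ → ZMod m) u₂} where
  toFun x := ⟨(⟨x.1 ∘ Sum.inl, ((coal_sol_iff G₁ G₂ u₁ u₂ x.1).mp x.2).1⟩,
      ⟨x.1 ∘ coalMap u₁ u₂, ((coal_sol_iff G₁ G₂ u₁ u₂ x.1).mp x.2).2⟩), by
        show x.1 (Sum.inl u₁) = x.1 (coalMap u₁ u₂ u₂)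
        simp [coalMap]⟩
  invFun p := ⟨glue u₂ p.1.1.1 p.1.2.1, by
    rw [coal_sol_iff, glue_comp_inl, glue_comp_coalMap u₁ u₂ _ _ p.2]
    exact ⟨p.1.1.2, p.1.2.2⟩⟩
  left_inv := by
    rintro ⟨x, hx⟩
    ext w
    cases w with
    | inl v => rfl
    | inr v =>
      show x (coalMap u₁ u₂ v.1) = x (Sum.inr v)
      simp [coalMap, v.2]
  right_inv := by
    rintro ⟨⟨x₁, x₂⟩, hc⟩
    simp only [Subtype.mk.injEq, Prod.mk.injEq]
    constructor
    · ext v; rfl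
    · ext v
      show (glue u₂ x₁.1 x₂.1 ∘ coalMap u₁ u₂) v = x₂.1 v
      rw [glue_comp_coalMap u₁ u₂ _ _ hc]

lemma coal_fiber_card [NeZero m] :
    Nat.card {p : G₁.sol × G₂.sol //
        (p.1 : V₁ → ZMod m) u₁ = (p.2 : V₂ → ZMod m) u₂} * m
      = Nat.card G₁.sol * Nat.card G₂.sol := by
  let f : (G₁.sol × G₂.sol) →+ ZMod m :=
    AddMonoidHom.mk' (fun p => (p.1 : V₁ → ZMod m) u₁ - (p.2 : V₂ → ZMod m) u₂) (by
      intro a b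
      show ((a.1 : V₁ → ZMod m) + b.1) u₁ - ((a.2 : V₂ → ZMod m) + b.2) u₂ = _
      simp only [Pi.add_apply]
      ring)
  have hsurj : Function.Surjective f := fun c =>
    ⟨(⟨fun _ => c, G₁.const_mem_sol c⟩, 0), by simp [f]⟩
  have h := card_ker_mul f hsurj
  have hcard : Nat.card (ZMod m) = m := Nat.card_eq_fintype_card.trans (ZMod.card m)
  have he : Nat.card {p : G₁.sol × G₂.sol //
      (p.1 : V₁ → ZMod m) u₁ = (p.2 : V₂ → ZMod m) u₂} = Nat.card f.ker := by
    refine Nat.card_congr ⟨fun p => ⟨p.1, ?_⟩, fun p => ⟨p.1, ?_⟩, fun p => rfl, fun p => rfl⟩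
    · exact sub_eq_zero_of_eq p.2
    · exact sub_eq_zero.mp p.2
  rw [hcard] at h
  rw [he, h, Nat.card_prod]

end Coal


/-- **Stabilizing index of a coalescence.** For nontrivial connected `m`-uniform
hypergraphs `G₁`, `G₂`, the stabilizing index of the coalescence `G₁(u₁) ⊙ G₂(u₂)` is the
product of the stabilizing indices of `G₁` and `G₂` (for any choice of base vertices). -/
theorem stabIndex_coalescence (m : ℕ) (hm : 2 ≤ m) {V₁ V₂ : Type}
    [DecidableEq V₁] [Fintype V₁] [DecidableEq V₂] [Fintype V₂]
    (G₁ : HG m V₁) (G₂ : HG m V₂) (u₁ : V₁) (u₂ : V₂)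
    (h₁ : G₁.Connected) (h₂ : G₂.Connected)
    (hn₁ : 2 ≤ Fintype.card V₁) (hn₂ : 2 ≤ Fintype.card V₂)
    (v₀ : V₁ ⊕ {v : V₂ // v ≠ u₂}) (v₁ : V₁) (v₂ : V₂) :
    (coalescence G₁ G₂ u₁ u₂).stabIndex v₀ = G₁.stabIndex v₁ * G₂.stabIndex v₂ := by
  haveI : NeZero m := ⟨by omega⟩
  have h0 := (coalescence G₁ G₂ u₁ u₂).stabIndex_mul v₀
  have h1 := G₁.stabIndex_mul v₁
  have h2 := G₂.stabIndex_mul v₂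
  have hK : Nat.card (coalescence G₁ G₂ u₁ u₂).sol
      = Nat.card {p : G₁.sol × G₂.sol //
          (p.1 : V₁ → ZMod m) u₁ = (p.2 : V₂ → ZMod m) u₂} :=
    Nat.card_congr (coalEquiv G₁ G₂ u₁ u₂)
  have hf := coal_fiber_card G₁ G₂ u₁ u₂
  have key : (coalescence G₁ G₂ u₁ u₂).stabIndex v₀ * (m * m)
      = G₁.stabIndex v₁ * G₂.stabIndex v₂ * (m * m) := by
    calc (coalescence G₁ G₂ u₁ u₂).stabIndex v₀ * (m * m)
        = ((coalescence G₁ G₂ u₁ u₂).stabIndex v₀ * m) * m := by ring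
      _ = G₁.stabIndex v₁ * G₂.stabIndex v₂ * (m * m) := by
          rw [h0, hK, hf, ← h1, ← h2]; ring
  exact Nat.eq_of_mul_eq_mul_right (by positivity) key
end

section
/- Let T be an m-uniform hypertree with s edges. Then the stabilizing index of T is s(T) = m^{s(m−2)}. -/
open Matrix

namespace HG

/-- `G` has a cycle: an alternating sequence `v₀ e₁ v₁ ⋯ e_t v_t` with `v₀ = v_t`,
pairwise distinct vertices `v₀, …, v_{t-1}`, pairwise distinct edges, consecutive vertices
distinct and lying in the corresponding edge. -/
def HasCycle {m : ℕ} {V : Type} (G : HG m V) : Prop :=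
  ∃ t : ℕ, 2 ≤ t ∧ ∃ (v : Fin (t + 1) → V) (e : Fin t → Finset V),
    (∀ i, e i ∈ G.edges) ∧
    (∀ i : Fin t, v i.castSucc ∈ e i ∧ v i.succ ∈ e i ∧ v i.castSucc ≠ v i.succ) ∧
    v (Fin.last t) = v 0 ∧
    Function.Injective (fun i : Fin t => v i.castSucc) ∧
    Function.Injective e

end HG
section TreeAux

set_option linter.unusedSectionVars false

variable {m : ℕ} {V : Type} [DecidableEq V]

/-- Adjacency with respect to an arbitrary edge set. -/
private def adjE (E : Finset (Finset V)) (u v : V) : Prop :=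
  u ≠ v ∧ ∃ e ∈ E, u ∈ e ∧ v ∈ e

/-- A (loose) path: `t` edges `e 0, …, e (t-1)`, vertices `v 0, …, v t`, consecutive
vertices distinct and in the corresponding edge, all vertices distinct, all edges distinct. -/
private def IsPath (E : Finset (Finset V)) (t : ℕ) (v : ℕ → V) (e : ℕ → Finset V) : Prop :=
  (∀ i < t, e i ∈ E ∧ v i ∈ e i ∧ v (i+1) ∈ e i ∧ v i ≠ v (i+1)) ∧
  (∀ i ≤ t, ∀ j ≤ t, v i = v j → i = j) ∧
  (∀ i < t, ∀ j < t, e i = e j → i = j)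

private lemma IsPath.le_card {E : Finset (Finset V)} {t : ℕ} {v : ℕ → V} {e : ℕ → Finset V}
    (h : IsPath E t v e) : t ≤ E.card := by
  have : (Finset.range t).card ≤ E.card := by
    apply Finset.card_le_card_of_injOn e
    · intro i hi
      exact (h.1 i (Finset.mem_range.mp hi)).1
    · intro i hi j hj hij
      simp only [Finset.coe_range, Set.mem_Iio] at hi hj
      exact h.2.2 i hi j hj hij
  simpa using this

private lemma mk_cycle (T : HG m V) (a c : ℕ) (hac : a + 1 ≤ c)
    (v : ℕ → V) (e : ℕ → Finset V) (g : Finset V)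
    (hpath : ∀ i, a ≤ i → i < c → e i ∈ T.edges ∧ v i ∈ e i ∧ v (i+1) ∈ e i ∧ v i ≠ v (i+1))
    (hvinj : ∀ i j, a ≤ i → i ≤ c → a ≤ j → j ≤ c → v i = v j → i = j)
    (heinj : ∀ i j, a ≤ i → i < c → a ≤ j → j < c → e i = e j → i = j)
    (hg : g ∈ T.edges) (hgc : v c ∈ g) (hga : v a ∈ g) (hne : v c ≠ v a)
    (hgne : ∀ i, a ≤ i → i < c → g ≠ e i) :
    T.HasCycle := by
  refine ⟨c - a + 1, by omega,
    (fun k => if (k : ℕ) = c - a + 1 then v a else v (a + (k : ℕ))),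
    (fun k => if (k : ℕ) = c - a then g else e (a + (k : ℕ))), ?_, ?_, ?_, ?_, ?_⟩
  · intro i
    dsimp only
    by_cases h : (i : ℕ) = c - a
    · rw [if_pos h]; exact hg
    · have hi := i.isLt
      rw [if_neg h]
      exact (hpath (a + (i : ℕ)) (by omega) (by omega)).1
  · intro i
    have hilt : (i : ℕ) < c - a + 1 := i.isLt
    dsimp only
    simp only [Fin.coe_castSucc, Fin.val_succ]
    rcases Nat.lt_or_ge (i : ℕ) (c - a) with hmid | hlast
    · have h1 : ¬((i : ℕ) = c - a + 1) := by omega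
      have h2 : ¬((i : ℕ) + 1 = c - a + 1) := by omega
      have h3 : ¬((i : ℕ) = c - a) := by omega
      rw [if_neg h1, if_neg h2, if_neg h3]
      have hp := hpath (a + (i : ℕ)) (by omega) (by omega)
      have e1 : a + ((i : ℕ) + 1) = a + (i : ℕ) + 1 := by omega
      rw [e1]
      exact ⟨hp.2.1, hp.2.2.1, hp.2.2.2⟩
    · have h : (i : ℕ) = c - a := by omega
      have h1 : ¬((i : ℕ) = c - a + 1) := by omega
      have h2 : (i : ℕ) + 1 = c - a + 1 := by omega
      rw [if_neg h1, if_pos h2, if_pos h]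
      have e1 : a + (i : ℕ) = c := by omega
      rw [e1]
      exact ⟨hgc, hga, hne⟩
  · dsimp only
    simp only [Fin.val_last, Fin.val_zero, if_true]
    split_ifs <;> rfl
  · intro i j hij
    dsimp only at hij
    simp only [Fin.coe_castSucc] at hij
    have hi := i.isLt; have hj := j.isLt
    rw [if_neg (by omega : ¬((i : ℕ) = c - a + 1)),
      if_neg (by omega : ¬((j : ℕ) = c - a + 1))] at hij
    have := hvinj (a + (i : ℕ)) (a + (j : ℕ)) (by omega) (by omega) (by omega) (by omega) hij
    exact Fin.ext (by omega)
  · intro i j hij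
    dsimp only at hij
    have hi := i.isLt; have hj := j.isLt
    by_cases h1 : (i : ℕ) = c - a <;> by_cases h2 : (j : ℕ) = c - a
    · exact Fin.ext (by omega)
    · rw [if_pos h1, if_neg h2] at hij
      exact absurd hij (hgne (a + (j : ℕ)) (by omega) (by omega))
    · rw [if_neg h1, if_pos h2] at hij
      exact absurd hij.symm (hgne (a + (i : ℕ)) (by omega) (by omega))
    · rw [if_neg h1, if_neg h2] at hij
      have := heinj (a + (i : ℕ)) (a + (j : ℕ)) (by omega) (by omega) (by omega) (by omega) hij
      exact Fin.ext (by omega)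

end TreeAux
section TreeAux2

set_option linter.unusedSectionVars false
set_option maxHeartbeats 1000000

variable {m : ℕ} {V : Type} [DecidableEq V]

private lemma exists_leaf (T : HG m V) (hm : 2 ≤ m) (hacyc : ¬ T.HasCycle)
    {E : Finset (Finset V)} (hE : E ⊆ T.edges) (hne : E.Nonempty) :
    ∃ e ∈ E, (e ∩ (E.erase e).biUnion id).card ≤ 1 := by
  classical
  by_contra hcon
  push_neg at hcon
  set P : ℕ → Prop := fun t => ∃ v e, IsPath E t v e with hP
  have hP1 : P 1 := by
    obtain ⟨e₀, he₀⟩ := hne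
    have hcard : 1 < e₀.card := by rw [T.uniform e₀ (hE he₀)]; omega
    obtain ⟨x, hx, y, hy, hxy⟩ := Finset.one_lt_card.mp hcard
    refine ⟨(fun i => if i = 0 then x else y), (fun _ => e₀), ?_, ?_, ?_⟩
    · intro i hi
      have : i = 0 := by omega
      subst this
      simpa using ⟨he₀, hx, hy, hxy⟩
    · intro i hi j hj hij
      dsimp only at hij
      interval_cases i <;> interval_cases j <;> simp_all
    · intro i hi j hj _
      omega
  have hcard1 : 1 ≤ E.card := hne.card_pos
  set t := Nat.findGreatest P E.card with ht
  have ht1 : 1 ≤ t := Nat.le_findGreatest hcard1 hP1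
  have htP : P t := Nat.findGreatest_spec hcard1 hP1
  obtain ⟨v, e, hpath, hvinj, heinj⟩ := htP
  have hlaste := hpath (t-1) (by omega)
  have hlt : t - 1 + 1 = t := by omega
  rw [hlt] at hlaste
  obtain ⟨heE, hv1, hv2, hv12⟩ := hlaste
  have h2 := hcon (e (t-1)) heE
  obtain ⟨x, hx, y, hy, hxy⟩ := Finset.one_lt_card.mp h2
  rw [Finset.mem_inter] at hx hy
  set u := if x = v (t-1) then y else x with hu
  have hune : u ≠ v (t-1) := by
    by_cases h : x = v (t-1)
    · rw [hu, if_pos h]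
      intro hc; exact hxy (h.trans hc.symm)
    · rw [hu, if_neg h]; exact h
  have hu1 : u ∈ e (t-1) := by
    by_cases h : x = v (t-1)
    · rw [hu, if_pos h]; exact hy.1
    · rw [hu, if_neg h]; exact hx.1
  have hu2 : ∃ f ∈ E, f ≠ e (t-1) ∧ u ∈ f := by
    have hmem : u ∈ (E.erase (e (t-1))).biUnion id := by
      by_cases h : x = v (t-1)
      · rw [hu, if_pos h]; exact hy.2
      · rw [hu, if_neg h]; exact hx.2
    simp only [Finset.mem_biUnion, Finset.mem_erase, id] at hmem
    obtain ⟨f, ⟨hfne, hfE⟩, huf⟩ := hmem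
    exact ⟨f, hfE, hfne, huf⟩
  obtain ⟨f, hfE, hfne, huf⟩ := hu2
  -- Case A: u appears strictly before index t-1 : close a cycle
  by_cases hA : ∃ i, i < t - 1 ∧ u = v i
  · obtain ⟨i, hi, hui⟩ := hA
    refine hacyc (mk_cycle T i (t-1) (by omega) v e (e (t-1))
      (fun j hj1 hj2 => by have hp := hpath j (by omega); exact ⟨hE hp.1, hp.2.1, hp.2.2.1, hp.2.2.2⟩)
      (fun j k hj1 hj2 hk1 hk2 hjk => hvinj j (by omega) k (by omega) hjk)
      (fun j k hj1 hj2 hk1 hk2 hjk => heinj j (by omega) k (by omega) hjk)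
      (hE heE) hv1 ?_ ?_ ?_)
    · rw [← hui]; exact hu1
    · rw [← hui]; exact hune.symm
    · intro j hj1 hj2 hcj
      have := heinj (t-1) (by omega) j (by omega) hcj
      omega
  · -- otherwise we may assume the endpoint of the path is `u`
    have key : ∃ w : ℕ → V, IsPath E t w e ∧ w t = u := by
      by_cases hut : ∃ i, i ≤ t ∧ u = v i
      · obtain ⟨i, hit, hui⟩ := hut
        have hieq : i = t := by
          rcases Nat.lt_or_ge i (t-1) with h' | h'
          · exact absurd ⟨i, h', hui⟩ hA
          · rcases Nat.lt_or_ge i t with h'' | h''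
            · have : i = t - 1 := by omega
              subst this
              exact absurd hui hune
            · omega
        subst hieq
        exact ⟨v, ⟨hpath, hvinj, heinj⟩, hui.symm⟩
      · push_neg at hut
        refine ⟨fun i => if i = t then u else v i, ⟨?_, ?_, ?_⟩, by simp⟩
        · intro i hi
          dsimp only
          have hit : ¬(i = t) := by omega
          rw [if_neg hit]
          by_cases h : i + 1 = t
          · rw [if_pos h]
            have h' : i = t - 1 := by omega
            subst h'
            exact ⟨heE, hv1, hu1, hune.symm⟩
          · rw [if_neg h]
            exact hpath i hi
        · intro i hi j hj hij
          dsimp only at hij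
          by_cases h1 : i = t <;> by_cases h2 : j = t
          · omega
          · rw [if_pos h1, if_neg h2] at hij
            exact absurd hij (hut j hj)
          · rw [if_neg h1, if_pos h2] at hij
            exact absurd hij.symm (hut i hi)
          · rw [if_neg h1, if_neg h2] at hij
            exact hvinj i hi j hj hij
        · exact heinj
    obtain ⟨w, ⟨hwpath, hwvinj, hweinj⟩, hwt⟩ := key
    have hwtf : w t ∈ f := by rw [hwt]; exact huf
    -- Case B0 : f already occurs on the path
    by_cases hB : ∃ j, j < t ∧ f = e j
    · obtain ⟨j, hjt, hfj⟩ := hB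
      have hjt1 : j < t - 1 := by
        rcases Nat.lt_or_ge j (t-1) with h | h
        · exact h
        · have : j = t - 1 := by omega
          exact absurd (this ▸ hfj) hfne
      refine hacyc (mk_cycle T (j+1) t (by omega) w e f
        (fun i h1 h2 => by have hp := hwpath i h2; exact ⟨hE hp.1, hp.2.1, hp.2.2.1, hp.2.2.2⟩)
        (fun i k h1 h2 h3 h4 hik => hwvinj i h2 k h4 hik)
        (fun i k h1 h2 h3 h4 hik => hweinj i h2 k h4 hik)
        (hE hfE) hwtf ?_ ?_ ?_)
      · rw [hfj]; exact (hwpath j hjt).2.2.1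
      · intro hc
        have := hwvinj t le_rfl (j+1) (by omega) hc
        omega
      · intro i h1 h2 hc
        have := hweinj j hjt i h2 (hfj.symm.trans hc)
        omega
    · push_neg at hB
      have hfcard : 1 < f.card := by rw [T.uniform f (hE hfE)]; omega
      obtain ⟨x', hx', y', hy', hxy'⟩ := Finset.one_lt_card.mp hfcard
      set z := if x' = w t then y' else x' with hz
      have hz1 : z ∈ f := by
        by_cases h : x' = w t
        · rw [hz, if_pos h]; exact hy'
        · rw [hz, if_neg h]; exact hx'
      have hzne : z ≠ w t := by
        by_cases h : x' = w t
        · rw [hz, if_pos h]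
          intro hc; exact hxy' (h.trans hc.symm)
        · rw [hz, if_neg h]; exact h
      by_cases hzv : ∃ i, i ≤ t ∧ z = w i
      · obtain ⟨i, hit, hzi⟩ := hzv
        have hilt : i < t := by
          rcases Nat.lt_or_ge i t with h | h
          · exact h
          · have : i = t := by omega
            subst this
            exact absurd hzi hzne
        refine hacyc (mk_cycle T i t (by omega) w e f
          (fun k h1 h2 => by have hp := hwpath k h2; exact ⟨hE hp.1, hp.2.1, hp.2.2.1, hp.2.2.2⟩)
          (fun k l h1 h2 h3 h4 h5 => hwvinj k h2 l h4 h5)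
          (fun k l h1 h2 h3 h4 h5 => hweinj k h2 l h4 h5)
          (hE hfE) hwtf ?_ ?_ ?_)
        · rw [← hzi]; exact hz1
        · intro hc
          exact hzne (hzi.trans hc.symm)
        · intro k h1 h2 hc
          exact hB k h2 hc
      · push_neg at hzv
        have hPt1 : P (t+1) := by
          refine ⟨fun i => if i = t + 1 then z else w i, fun i => if i = t then f else e i,
            ?_, ?_, ?_⟩
          · intro i hi
            dsimp only
            by_cases h : i = t
            · subst h
              rw [if_pos rfl, if_neg (by omega : ¬(t = t + 1)), if_pos rfl]
              exact ⟨hfE, hwtf, hz1, fun hc => hzne hc.symm⟩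
            · have hi' : i < t := by omega
              rw [if_neg h, if_neg (by omega : ¬(i = t + 1)),
                if_neg (by omega : ¬(i + 1 = t + 1))]
              exact hwpath i hi'
          · intro i hi j hj hij
            dsimp only at hij
            by_cases h1 : i = t + 1 <;> by_cases h2 : j = t + 1
            · omega
            · rw [if_pos h1, if_neg h2] at hij
              exact absurd hij (hzv j (by omega))
            · rw [if_neg h1, if_pos h2] at hij
              exact absurd hij.symm (hzv i (by omega))
            · rw [if_neg h1, if_neg h2] at hij
              exact hwvinj i (by omega) j (by omega) hij
          · intro i hi j hj hij
            dsimp only at hij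
            by_cases h1 : i = t <;> by_cases h2 : j = t
            · omega
            · rw [if_pos h1, if_neg h2] at hij
              exact absurd hij (hB j (by omega))
            · rw [if_neg h1, if_pos h2] at hij
              exact absurd hij.symm (hB i (by omega))
            · rw [if_neg h1, if_neg h2] at hij
              exact hweinj i (by omega) j (by omega) hij
        have hle : t + 1 ≤ E.card := by
          obtain ⟨w', e', hp⟩ := hPt1
          exact hp.le_card
        exact Nat.findGreatest_is_greatest (by omega) hle hPt1

end TreeAux2
section TreeAux3

set_option linter.unusedSectionVars false
set_option maxHeartbeats 1000000

variable {m : ℕ} {V : Type} [DecidableEq V]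

private def ConnOn (E : Finset (Finset V)) : Prop :=
  ∀ u ∈ E.biUnion id, ∀ w ∈ E.biUnion id, Relation.ReflTransGen (adjE E) u w

private lemma inter_nonempty {E : Finset (Finset V)} (hconn : ConnOn E) {e : Finset V}
    (heE : e ∈ E) (hene : e.Nonempty) (hne : (E.erase e).Nonempty)
    (hfne : ∀ f ∈ E.erase e, f.Nonempty) :
    (e ∩ (E.erase e).biUnion id).Nonempty := by
  by_contra hcon
  rw [Finset.not_nonempty_iff_eq_empty] at hcon
  have hdisj : ∀ x ∈ e, x ∉ (E.erase e).biUnion id := by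
    intro x hx hx'
    have hmem : x ∈ e ∩ (E.erase e).biUnion id := Finset.mem_inter.mpr ⟨hx, hx'⟩
    rw [hcon] at hmem
    exact absurd hmem (Finset.notMem_empty x)
  obtain ⟨u, hu⟩ := hene
  obtain ⟨f, hf⟩ := hne
  obtain ⟨z, hz⟩ := hfne f hf
  have hzU : z ∈ (E.erase e).biUnion id := Finset.mem_biUnion.mpr ⟨f, hf, hz⟩
  have huU : u ∈ E.biUnion id := Finset.mem_biUnion.mpr ⟨e, heE, hu⟩
  have hzU' : z ∈ E.biUnion id := Finset.mem_biUnion.mpr ⟨f, (Finset.mem_erase.mp hf).2, hz⟩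
  have hwalk := hconn u huU z hzU'
  have hclosed : ∀ a b : V, Relation.ReflTransGen (adjE E) a b → a ∈ e → b ∈ e := by
    intro a b hab
    induction hab with
    | refl => exact id
    | tail h1 h2 ih =>
      intro ha
      have hb' := ih ha
      obtain ⟨hne', g, hgE, h1g, h2g⟩ := h2
      by_cases hg : g = e
      · subst hg; exact h2g
      · exact absurd (Finset.mem_biUnion.mpr ⟨g, Finset.mem_erase.mpr ⟨hg, hgE⟩, h1g⟩)
          (hdisj _ hb')
  exact hdisj z (hclosed u z hwalk hu) hzU

private lemma connOn_erase {E : Finset (Finset V)} {e : Finset V} {w : V}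
    (hw : e ∩ (E.erase e).biUnion id ⊆ {w}) (hwU : w ∈ (E.erase e).biUnion id)
    (hconn : ConnOn E) : ConnOn (E.erase e) := by
  classical
  intro u hu z hz
  set U' := (E.erase e).biUnion id with hU'
  set h : V → V := fun x => if x ∈ e ∧ x ∉ U' then w else x with hh
  have hfix : ∀ x ∈ U', h x = x := by
    intro x hx
    rw [hh]
    dsimp only
    rw [if_neg]
    push_neg
    intro _; exact hx
  have hin : ∀ x ∈ e, h x = w := by
    intro x hx
    by_cases hxU : x ∈ U'
    · have hxw : x = w := by
        have := hw (Finset.mem_inter.mpr ⟨hx, hxU⟩)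
        simpa using this
      rw [hfix x hxU, hxw]
    · rw [hh]; dsimp only; rw [if_pos ⟨hx, hxU⟩]
  have hstep : ∀ a b : V, adjE E a b → Relation.ReflTransGen (adjE (E.erase e)) (h a) (h b) := by
    rintro a b ⟨hab, g, hgE, hag, hbg⟩
    by_cases hg : g = e
    · subst hg
      rw [hin a hag, hin b hbg]
    · have hgE' : g ∈ E.erase e := Finset.mem_erase.mpr ⟨hg, hgE⟩
      have haU : a ∈ U' := Finset.mem_biUnion.mpr ⟨g, hgE', hag⟩
      have hbU : b ∈ U' := Finset.mem_biUnion.mpr ⟨g, hgE', hbg⟩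
      rw [hfix a haU, hfix b hbU]
      exact Relation.ReflTransGen.single ⟨hab, g, hgE', hag, hbg⟩
  have hmain : ∀ a b : V, Relation.ReflTransGen (adjE E) a b →
      Relation.ReflTransGen (adjE (E.erase e)) (h a) (h b) := by
    intro a b hab
    induction hab with
    | refl => exact Relation.ReflTransGen.refl
    | tail h1 h2 ih => exact ih.trans (hstep _ _ h2)
  have hu' : u ∈ E.biUnion id := by
    obtain ⟨f, hf, huf⟩ := Finset.mem_biUnion.mp hu
    exact Finset.mem_biUnion.mpr ⟨f, (Finset.mem_erase.mp hf).2, huf⟩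
  have hz' : z ∈ E.biUnion id := by
    obtain ⟨f, hf, hzf⟩ := Finset.mem_biUnion.mp hz
    exact Finset.mem_biUnion.mpr ⟨f, (Finset.mem_erase.mp hf).2, hzf⟩
  have := hmain u z (hconn u hu' z hz')
  rwa [hfix u hu, hfix z hz] at this

private lemma count_lemma (T : HG m V) (hm : 2 ≤ m) (hacyc : ¬ T.HasCycle) :
    ∀ k : ℕ, ∀ E : Finset (Finset V), E ⊆ T.edges → E.card = k → E.Nonempty → ConnOn E →
      (E.biUnion id).card = k * (m - 1) + 1 := by
  intro k
  induction k with
  | zero =>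
    intro E hE hcard hne _
    rw [Finset.card_eq_zero] at hcard
    subst hcard
    exact absurd hne (by simp)
  | succ k ih =>
    intro E hE hcard hne hconn
    obtain ⟨e, heE, hleaf⟩ := exists_leaf T hm hacyc hE hne
    have hecard : e.card = m := T.uniform e (hE heE)
    by_cases hk : k = 0
    · subst hk
      obtain ⟨a, ha⟩ := Finset.card_eq_one.mp hcard
      subst ha
      have hea : e = a := by simpa using heE
      subst hea
      simp only [Finset.singleton_biUnion, id]
      omega
    · have hE' : (E.erase e).Nonempty := by
        rw [← Finset.card_pos, Finset.card_erase_of_mem heE, hcard]; omega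
      have hsubE' : E.erase e ⊆ T.edges := fun f hf => hE (Finset.mem_erase.mp hf).2
      have hint : (e ∩ (E.erase e).biUnion id).Nonempty := by
        apply inter_nonempty hconn heE
        · rw [← Finset.card_pos, hecard]; omega
        · exact hE'
        · intro f hf
          rw [← Finset.card_pos, T.uniform f (hE (Finset.mem_erase.mp hf).2)]; omega
      obtain ⟨w, hwmem⟩ := hint
      have hwsub : e ∩ (E.erase e).biUnion id ⊆ {w} := by
        intro x hx
        rw [Finset.mem_singleton]
        exact Finset.card_le_one.mp hleaf x hx w hwmem
      have hinter_eq : e ∩ (E.erase e).biUnion id = {w} :=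
        Finset.Subset.antisymm hwsub (Finset.singleton_subset_iff.mpr hwmem)
      have hwU : w ∈ (E.erase e).biUnion id := (Finset.mem_inter.mp hwmem).2
      have hconn' : ConnOn (E.erase e) := connOn_erase hwsub hwU hconn
      have hcard' : (E.erase e).card = k := by
        rw [Finset.card_erase_of_mem heE, hcard]; omega
      have hIH := ih (E.erase e) hsubE' hcard' hE' hconn'
      have hEeq : E.biUnion id = e ∪ (E.erase e).biUnion id := by
        conv_lhs => rw [← Finset.insert_erase heE]
        rw [Finset.biUnion_insert, id]
      have hcui := Finset.card_union_add_card_inter e ((E.erase e).biUnion id)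
      rw [hinter_eq, Finset.card_singleton] at hcui
      rw [hEeq]
      have hdist : (k+1) * (m-1) = k * (m-1) + (m-1) := by ring
      omega

private lemma surj_lemma (T : HG m V) (hm : 2 ≤ m) (hacyc : ¬ T.HasCycle) :
    ∀ k : ℕ, ∀ E : Finset (Finset V), E ⊆ T.edges → E.card = k →
      ∀ y : Finset V → ZMod m, ∃ x : V → ZMod m, ∀ e ∈ E, ∑ v ∈ e, x v = y e := by
  intro k
  induction k with
  | zero =>
    intro E hE hcard y
    rw [Finset.card_eq_zero] at hcard
    subst hcard
    exact ⟨0, by simp⟩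
  | succ k ih =>
    intro E hE hcard y
    have hne : E.Nonempty := by rw [← Finset.card_pos, hcard]; omega
    obtain ⟨e, heE, hleaf⟩ := exists_leaf T hm hacyc hE hne
    have hecard : e.card = m := T.uniform e (hE heE)
    have hsubE' : E.erase e ⊆ T.edges := fun f hf => hE (Finset.mem_erase.mp hf).2
    have hcard' : (E.erase e).card = k := by
      rw [Finset.card_erase_of_mem heE, hcard]; omega
    obtain ⟨x', hx'⟩ := ih (E.erase e) hsubE' hcard' y
    have hpriv : (e \ (E.erase e).biUnion id).Nonempty := by
      rw [← Finset.card_pos]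
      have := Finset.card_sdiff_add_card_inter e ((E.erase e).biUnion id)
      omega
    obtain ⟨p, hp⟩ := hpriv
    rw [Finset.mem_sdiff] at hp
    obtain ⟨hpe, hpU⟩ := hp
    have hpnot : ∀ f ∈ E.erase e, p ∉ f := fun f hf hpf => hpU (Finset.mem_biUnion.mpr ⟨f, hf, hpf⟩)
    set c := x' p + (y e - ∑ v ∈ e, x' v) with hc
    refine ⟨Function.update x' p c, ?_⟩
    intro f hfE
    by_cases hf : f = e
    · subst hf
      rw [Finset.sum_update_of_mem hpe]
      have hsum : ∑ v ∈ f \ {p}, x' v + x' p = ∑ v ∈ f, x' v := by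
        rw [Finset.sdiff_singleton_eq_erase]
        exact Finset.sum_erase_add f x' hpe
      rw [hc]
      linear_combination hsum
    · have hf' : f ∈ E.erase e := Finset.mem_erase.mpr ⟨hf, hfE⟩
      rw [← hx' f hf']
      apply Finset.sum_congr rfl
      intro v hv
      exact Function.update_of_ne (fun hvp : v = p => hpnot f hf' (hvp ▸ hv)) c x'

private lemma mulVec_apply (T : HG m V) [Fintype V] (x : V → ZMod m) (e : {e // e ∈ T.edges}) :
    T.inc.mulVec x e = ∑ v ∈ e.1, x v := by
  simp only [HG.inc, Matrix.mulVec, dotProduct, Matrix.of_apply, ite_mul, one_mul,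
    zero_mul]
  rw [Finset.sum_ite_mem, Finset.univ_inter]

end TreeAux3
set_option maxHeartbeats 1000000
/-- **Stabilizing index of a hypertree.** An `m`-uniform hypertree (connected and acyclic)
with `s` edges has stabilizing index `m^{s(m-2)}`. -/
theorem stabIndex_hypertree (m s : ℕ) (hm : 2 ≤ m) {V : Type} [DecidableEq V] [Fintype V]
    (T : HG m V) (hconn : T.Connected) (hacyc : ¬ T.HasCycle)
    (hs : T.edges.card = s) (v₀ : V) :
    T.stabIndex v₀ = m ^ (s * (m - 2)) := by
  classical
  haveI : NeZero m := ⟨by omega⟩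
  -- Step 1: the number of vertices is s(m-1)+1.
  have hcardV : Fintype.card V = s * (m - 1) + 1 := by
    rcases Nat.eq_zero_or_pos s with hs0 | hspos
    · subst hs0
      rw [Finset.card_eq_zero] at hs
      have key : ∀ a b : V, Relation.ReflTransGen T.adj a b → a = b := by
        intro a b hab
        induction hab with
        | refl => rfl
        | tail h1 h2 ih =>
          obtain ⟨_, g, hg, _⟩ := h2
          rw [hs] at hg
          exact absurd hg (Finset.notMem_empty g)
      have h1 : Fintype.card V = 1 :=
        Fintype.card_eq_one_iff.mpr ⟨v₀, fun y => key y v₀ (hconn y v₀)⟩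
      omega
    · have huniv : (Finset.univ : Finset V) = T.edges.biUnion id := by
        apply Finset.Subset.antisymm _ (Finset.subset_univ _)
        intro v1 _
        simp only [Finset.mem_biUnion, id]
        obtain ⟨e₀, he₀⟩ := Finset.card_pos.mp (by omega : 0 < T.edges.card)
        obtain ⟨u, hu⟩ := Finset.card_pos.mp
          (by rw [T.uniform e₀ he₀]; omega : 0 < e₀.card)
        rcases Relation.ReflTransGen.cases_head (hconn v1 u) with heq | ⟨c, hadj', _⟩
        · exact ⟨e₀, he₀, heq ▸ hu⟩
        · obtain ⟨_, g, hg, hvg, _⟩ := hadj'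
          exact ⟨g, hg, hvg⟩
      have hconnE : ConnOn T.edges := fun u _ z _ => hconn u z
      have hne' : T.edges.Nonempty := Finset.card_pos.mp (by omega)
      have hcount := count_lemma T hm hacyc s T.edges subset_rfl hs hne' hconnE
      rw [← Finset.card_univ, huniv, hcount]
  -- Step 2: linear-algebraic counting.
  set A := V → ZMod m with hA
  let g1 : (V → ZMod m) →+ ({e // e ∈ T.edges} → ZMod m) :=
    { toFun := fun x e => ∑ v ∈ e.1, x v
      map_zero' := by funext e; simp
      map_add' := by intro x y; funext e; simp [Finset.sum_add_distrib] }
  let g2 : (V → ZMod m) →+ ZMod m := Pi.evalAddMonoidHom _ v₀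
  set g := g1.prod g2 with hgdef
  have hg : ∀ x : V → ZMod m, g x = (fun e => ∑ v ∈ e.1, x v, x v₀) := fun _ => rfl
  have hsurj : Function.Surjective g := by
    rintro ⟨y, cc⟩
    obtain ⟨x₀, hx₀⟩ := surj_lemma T hm hacyc T.edges.card T.edges subset_rfl rfl
      (fun e => if h : e ∈ T.edges then y ⟨e, h⟩ else 0)
    refine ⟨fun v => x₀ v + (cc - x₀ v₀), ?_⟩
    rw [hg]
    have hc1 : (fun (e : {e // e ∈ T.edges}) => ∑ v ∈ e.1, (x₀ v + (cc - x₀ v₀))) = y := by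
      funext e
      rw [Finset.sum_add_distrib, Finset.sum_const, T.uniform e.1 e.2]
      have hz : (m : ℕ) • (cc - x₀ v₀) = 0 := by
        rw [nsmul_eq_mul, ZMod.natCast_self, zero_mul]
      rw [hz, add_zero, hx₀ e.1 e.2, dif_pos e.2]
    have hc2 : x₀ v₀ + (cc - x₀ v₀) = cc := by ring
    rw [hc1, hc2]
  have hker : T.stabIndex v₀ = Nat.card g.ker := by
    unfold HG.stabIndex
    apply Nat.card_congr
    apply Equiv.subtypeEquivRight
    intro x
    have hmv : T.inc.mulVec x = (fun e => ∑ v ∈ e.1, x v) := funext (mulVec_apply T x)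
    rw [AddMonoidHom.mem_ker, hg x, Prod.ext_iff]
    simp only [Prod.fst_zero, Prod.snd_zero]
    rw [hmv]
  have hcardA : Nat.card (V → ZMod m) = m ^ (s * (m-1) + 1) := by
    rw [Nat.card_pi]
    simp only [Nat.card_zmod]
    rw [Finset.prod_const, Finset.card_univ, hcardV]
  have hcardB : Nat.card (({e // e ∈ T.edges} → ZMod m) × ZMod m) = m ^ (s + 1) := by
    rw [Nat.card_prod, Nat.card_pi]
    simp only [Nat.card_zmod]
    rw [Finset.prod_const, Finset.card_univ, Fintype.card_coe, hs, pow_succ]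
  have hquot := AddSubgroup.card_eq_card_quotient_mul_card_addSubgroup g.ker
  have hqe : Nat.card ((V → ZMod m) ⧸ g.ker) =
      Nat.card (({e // e ∈ T.edges} → ZMod m) × ZMod m) :=
    Nat.card_congr (QuotientAddGroup.quotientKerEquivOfSurjective g hsurj).toEquiv
  have hmain : m ^ (s*(m-1)+1) = m ^ (s+1) * Nat.card g.ker := by
    rw [← hcardA, hquot, hqe, hcardB]
  have hexp : s*(m-1)+1 = s*(m-2) + (s+1) := by
    have h1 : m - 1 = m - 2 + 1 := by omega
    have h2 : s*(m-1) = s*(m-2)+s := by rw [h1, Nat.mul_add, mul_one]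
    omega
  rw [hexp, pow_add] at hmain
  have hpos : 0 < m ^ (s+1) := Nat.pow_pos (by omega)
  rw [hker]
  rw [mul_comm (m ^ (s*(m-2)))] at hmain
  exact (Nat.eq_of_mul_eq_mul_left hpos hmain).symm
end

section
/- Let G = G₁(u) ⊙ G₂(u) be the coalescence of two nontrivial connected m-uniform hypergraphs at a vertex u, and for a hypergraph H let c(H) denote the largest divisor ℓ of m such that In(H)x = (m/ℓ)𝟙 has a solution over ℤ/mℤ. Then c(G) = gcd(c(G₁), c(G₂)). -/
open Matrix

section NatAux

/-- `gcd(m/a, m/b) = m / lcm(a,b)` for divisors `a, b` of `m ≠ 0`. -/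
lemma gcd_div_eq_div_lcm {m a b : ℕ} (hm : m ≠ 0) (ha : a ∣ m) (hb : b ∣ m) :
    Nat.gcd (m / a) (m / b) = m / Nat.lcm a b := by
  have ha0 : a ≠ 0 := fun h => hm (by simpa [h] using ha)
  have hb0 : b ≠ 0 := fun h => hm (by simpa [h] using hb)
  have hg0 : 0 < Nat.gcd a b := Nat.gcd_pos_of_pos_left _ (Nat.pos_of_ne_zero ha0)
  set g := Nat.gcd a b with hg
  obtain ⟨a', ha'⟩ : g ∣ a := Nat.gcd_dvd_left a b
  obtain ⟨b', hb'⟩ : g ∣ b := Nat.gcd_dvd_right a b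
  have cop : Nat.Coprime a' b' := by
    have h1 : a / g = a' := by rw [ha', Nat.mul_div_cancel_left _ hg0]
    have h2 : b / g = b' := by rw [hb', Nat.mul_div_cancel_left _ hg0]
    have := Nat.coprime_div_gcd_div_gcd (m := a) (n := b) hg0
    rwa [← hg, h1, h2] at this
  have hlcm : Nat.lcm a b = g * a' * b' := by
    have : a * b = g * (g * a' * b') := by rw [ha', hb']; ring
    rw [Nat.lcm, ← hg, this, Nat.mul_div_cancel_left _ hg0]
  obtain ⟨k, hk⟩ : Nat.lcm a b ∣ m := Nat.lcm_dvd ha hb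
  have ha'0 : a' ≠ 0 := by rintro rfl; simp at ha'; exact ha0 ha'
  have hb'0 : b' ≠ 0 := by rintro rfl; simp at hb'; exact hb0 hb'
  have hma : m / a = b' * k := by
    have : m = a * (b' * k) := by rw [hk, hlcm, ha']; ring
    rw [this, Nat.mul_div_cancel_left _ (Nat.pos_of_ne_zero ha0)]
  have hmb : m / b = a' * k := by
    have : m = b * (a' * k) := by rw [hk, hlcm, hb']; ring
    rw [this, Nat.mul_div_cancel_left _ (Nat.pos_of_ne_zero hb0)]
  have hml : m / Nat.lcm a b = k := by
    rw [hk, Nat.mul_div_cancel_left]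
    rw [hlcm]
    exact Nat.pos_of_ne_zero (by positivity)
  rw [hma, hmb, hml, Nat.gcd_mul_right, Nat.Coprime.gcd_eq_one (Nat.Coprime.symm cop), one_mul]

lemma my_div_mul_div_cancel {m a b : ℕ} (hm : m ≠ 0) (hba : b ∣ a) (ham : a ∣ m) :
    (a / b) * (m / a) = m / b := by
  have ha0 : a ≠ 0 := fun h => hm (by simpa [h] using ham)
  have hb0 : b ≠ 0 := fun h => ha0 (by simpa [h] using hba)
  obtain ⟨u, rfl⟩ := hba
  obtain ⟨k, hk⟩ := ham
  have hk' : m = b * (u * k) := by rw [hk]; ring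
  rw [Nat.mul_div_cancel_left _ (Nat.pos_of_ne_zero hb0), hk,
    Nat.mul_div_cancel_left _ (Nat.pos_of_ne_zero ha0), mul_assoc,
    Nat.mul_div_cancel_left _ (Nat.pos_of_ne_zero hb0)]

end NatAux

section ColSet

variable {m : ℕ} {V : Type}

/-- The set of `ℓ` for which `G` has an `(m,ℓ)`-coloring. -/
def colSet (G : HG m V) : Set ℕ :=
  {ℓ : ℕ | ℓ ∣ m ∧ ∃ x : V → ZMod m, ∀ e ∈ G.edges, ∑ v ∈ e, x v = ((m / ℓ : ℕ) : ZMod m)}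

lemma cyclicIndex_eq_sSup (G : HG m V) : G.cyclicIndex = sSup (colSet G) := rfl

lemma one_mem_colSet (G : HG m V) : 1 ∈ colSet G :=
  ⟨one_dvd m, 0, fun e _ => by simp [ZMod.natCast_self]⟩

lemma bddAbove_of_subset_colSet (hm : m ≠ 0) {S : Set ℕ} {G : HG m V}
    (hS : S ⊆ colSet G) : BddAbove S :=
  ⟨m, fun ℓ hℓ => Nat.le_of_dvd (Nat.pos_of_ne_zero hm) (hS hℓ).1⟩

lemma comb_col {G : HG m V} {c₁ c₂ : ZMod m} (s t : ℤ)
    (h₁ : ∃ x : V → ZMod m, ∀ e ∈ G.edges, ∑ v ∈ e, x v = c₁)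
    (h₂ : ∃ x : V → ZMod m, ∀ e ∈ G.edges, ∑ v ∈ e, x v = c₂) :
    ∃ x : V → ZMod m, ∀ e ∈ G.edges, ∑ v ∈ e, x v = (s : ZMod m) * c₁ + (t : ZMod m) * c₂ := by
  obtain ⟨x₁, hx₁⟩ := h₁; obtain ⟨x₂, hx₂⟩ := h₂
  refine ⟨fun v => (s : ZMod m) * x₁ v + (t : ZMod m) * x₂ v, fun e he => ?_⟩
  rw [Finset.sum_add_distrib, ← Finset.mul_sum, ← Finset.mul_sum, hx₁ e he, hx₂ e he]

lemma dvd_mem_colSet (hm : m ≠ 0) {G : HG m V} {a b : ℕ}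
    (ha : a ∈ colSet G) (hba : b ∣ a) : b ∈ colSet G := by
  obtain ⟨ham, hx⟩ := ha
  refine ⟨hba.trans ham, ?_⟩
  have := comb_col (G := G) ((a / b : ℕ) : ℤ) 0 hx hx
  simp only [Int.cast_zero, zero_mul, add_zero, Int.cast_natCast] at this
  obtain ⟨x, hxx⟩ := this
  refine ⟨x, fun e he => ?_⟩
  rw [hxx e he, ← Nat.cast_mul, my_div_mul_div_cancel hm hba ham]

lemma lcm_mem_colSet (hm : m ≠ 0) {G : HG m V} {a b : ℕ}
    (ha : a ∈ colSet G) (hb : b ∈ colSet G) : Nat.lcm a b ∈ colSet G := by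
  obtain ⟨ham, hxa⟩ := ha
  obtain ⟨hbm, hxb⟩ := hb
  refine ⟨Nat.lcm_dvd ham hbm, ?_⟩
  set p := m / a
  set q := m / b
  obtain ⟨x, hx⟩ := comb_col (G := G) (Nat.gcdA p q) (Nat.gcdB p q) hxa hxb
  refine ⟨x, fun e he => ?_⟩
  rw [hx e he, ← gcd_div_eq_div_lcm hm ham hbm]
  have bez : ((Nat.gcd p q : ℕ) : ℤ) = (p : ℤ) * Nat.gcdA p q + (q : ℤ) * Nat.gcdB p q :=
    Nat.gcd_eq_gcd_ab p q
  calc (Nat.gcdA p q : ZMod m) * ((p : ℕ) : ZMod m) + (Nat.gcdB p q : ZMod m) * ((q : ℕ) : ZMod m)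
      = (((p : ℤ) * Nat.gcdA p q + (q : ℤ) * Nat.gcdB p q : ℤ) : ZMod m) := by push_cast; ring
    _ = ((Nat.gcd p q : ℕ) : ZMod m) := by rw [← bez]; push_cast; ring

/-- Every element of the coloring set divides its supremum, provided the set
is closed under `lcm`. -/
lemma mem_dvd_sSup_colSet (hm : m ≠ 0) {S : Set ℕ} {G : HG m V}
    (hS : S ⊆ colSet G) (h1 : (1 : ℕ) ∈ S)
    (hlcm : ∀ a ∈ S, ∀ b ∈ S, Nat.lcm a b ∈ S) {ℓ : ℕ} (hℓ : ℓ ∈ S) :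
    ℓ ∣ sSup S := by
  have hbdd : BddAbove S := bddAbove_of_subset_colSet hm hS
  have hmem : sSup S ∈ S := Nat.sSup_mem ⟨1, h1⟩ hbdd
  have hpos : 0 < sSup S := lt_of_lt_of_le one_pos (le_csSup hbdd h1)
  have hlmem : Nat.lcm ℓ (sSup S) ∈ S := hlcm ℓ hℓ _ hmem
  have h1le : Nat.lcm ℓ (sSup S) ≤ sSup S := le_csSup hbdd hlmem
  have hl0 : ℓ ≠ 0 := fun h => hm (Nat.eq_zero_of_zero_dvd (h ▸ (hS hℓ).1))
  have hlp : 0 < Nat.lcm ℓ (sSup S) :=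
    Nat.pos_of_ne_zero (Nat.lcm_ne_zero hl0 (by omega))
  have h2le : sSup S ≤ Nat.lcm ℓ (sSup S) :=
    Nat.le_of_dvd hlp (Nat.dvd_lcm_right ℓ (sSup S))
  have : Nat.lcm ℓ (sSup S) = sSup S := le_antisymm h1le h2le
  exact this ▸ Nat.dvd_lcm_left ℓ (sSup S)

end ColSet

lemma colSet_coalescence {m : ℕ} {V₁ V₂ : Type} [DecidableEq V₁] [DecidableEq V₂]
    (G₁ : HG m V₁) (G₂ : HG m V₂) (u₁ : V₁) (u₂ : V₂) :
    colSet (coalescence G₁ G₂ u₁ u₂) = colSet G₁ ∩ colSet G₂ := by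
  ext ℓ
  constructor
  · rintro ⟨hdvd, x, hx⟩
    refine ⟨⟨hdvd, fun v => x (Sum.inl v), fun e he => ?_⟩,
      ⟨hdvd, fun v => x (coalMap u₁ u₂ v), fun e he => ?_⟩⟩
    · have hmem : e.image Sum.inl ∈ (coalescence G₁ G₂ u₁ u₂).edges :=
        Finset.mem_union_left _ (Finset.mem_image_of_mem _ he)
      have := hx _ hmem
      rwa [Finset.sum_image (fun a _ b _ h => Sum.inl_injective h)] at this
    · have hmem : e.image (coalMap u₁ u₂) ∈ (coalescence G₁ G₂ u₁ u₂).edges :=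
        Finset.mem_union_right _ (Finset.mem_image_of_mem _ he)
      have := hx _ hmem
      rwa [Finset.sum_image (fun a _ b _ h => coalMap_injective u₁ u₂ h)] at this
  · rintro ⟨⟨hdvd, x₁, hx₁⟩, ⟨_, x₂, hx₂⟩⟩
    refine ⟨hdvd, Sum.elim x₁ (fun v => x₂ v.1 + (x₁ u₁ - x₂ u₂)), fun e he => ?_⟩
    simp only [coalescence, Finset.mem_union, Finset.mem_image] at he
    rcases he with ⟨f, hf, rfl⟩ | ⟨f, hf, rfl⟩
    · rw [Finset.sum_image (fun a _ b _ h => Sum.inl_injective h)]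
      simpa using hx₁ f hf
    · rw [Finset.sum_image (fun a _ b _ h => coalMap_injective u₁ u₂ h)]
      have hpt : ∀ v : V₂, Sum.elim x₁ (fun v : {v : V₂ // v ≠ u₂} => x₂ v.1 + (x₁ u₁ - x₂ u₂))
          (coalMap u₁ u₂ v) = x₂ v + (x₁ u₁ - x₂ u₂) := by
        intro v
        unfold coalMap
        split_ifs with h
        · subst h; simp
        · simp
      rw [Finset.sum_congr rfl (fun v _ => hpt v), Finset.sum_add_distrib,
        Finset.sum_const, hx₂ f hf, G₂.uniform f hf, nsmul_eq_mul,
        ZMod.natCast_self, zero_mul, add_zero]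

/-- **Cyclic index of a coalescence.** For nontrivial connected `m`-uniform hypergraphs
`G₁`, `G₂`, the cyclic index of the coalescence `G₁(u₁) ⊙ G₂(u₂)` is
`gcd(c(G₁), c(G₂))`. -/
theorem cyclicIndex_coalescence (m : ℕ) (hm : 2 ≤ m) {V₁ V₂ : Type}
    [DecidableEq V₁] [Fintype V₁] [DecidableEq V₂] [Fintype V₂]
    (G₁ : HG m V₁) (G₂ : HG m V₂) (u₁ : V₁) (u₂ : V₂)
    (h₁ : G₁.Connected) (h₂ : G₂.Connected)
    (hn₁ : 2 ≤ Fintype.card V₁) (hn₂ : 2 ≤ Fintype.card V₂) :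
    (coalescence G₁ G₂ u₁ u₂).cyclicIndex = Nat.gcd G₁.cyclicIndex G₂.cyclicIndex := by
  have hm0 : m ≠ 0 := by omega
  rw [cyclicIndex_eq_sSup, cyclicIndex_eq_sSup, cyclicIndex_eq_sSup,
    colSet_coalescence G₁ G₂ u₁ u₂]
  set S₁ := colSet G₁ with hS₁
  set S₂ := colSet G₂ with hS₂
  have h1S₁ : (1 : ℕ) ∈ S₁ := one_mem_colSet G₁
  have h1S₂ : (1 : ℕ) ∈ S₂ := one_mem_colSet G₂
  have hc₁mem : sSup S₁ ∈ S₁ :=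
    Nat.sSup_mem ⟨1, h1S₁⟩ (bddAbove_of_subset_colSet hm0 (le_refl S₁))
  have hc₂mem : sSup S₂ ∈ S₂ :=
    Nat.sSup_mem ⟨1, h1S₂⟩ (bddAbove_of_subset_colSet hm0 (le_refl S₂))
  have hcmem : sSup (S₁ ∩ S₂) ∈ S₁ ∩ S₂ :=
    Nat.sSup_mem ⟨1, h1S₁, h1S₂⟩
      (bddAbove_of_subset_colSet hm0 (Set.inter_subset_left (t := S₂)))
  apply Nat.dvd_antisymm
  · refine Nat.dvd_gcd ?_ ?_
    · exact mem_dvd_sSup_colSet hm0 (le_refl S₁) h1S₁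
        (fun a ha b hb => lcm_mem_colSet hm0 ha hb) hcmem.1
    · exact mem_dvd_sSup_colSet hm0 (le_refl S₂) h1S₂
        (fun a ha b hb => lcm_mem_colSet hm0 ha hb) hcmem.2
  · have hg₁ : Nat.gcd (sSup S₁) (sSup S₂) ∈ S₁ :=
      dvd_mem_colSet hm0 hc₁mem (Nat.gcd_dvd_left _ _)
    have hg₂ : Nat.gcd (sSup S₁) (sSup S₂) ∈ S₂ :=
      dvd_mem_colSet hm0 hc₂mem (Nat.gcd_dvd_right _ _)
    exact mem_dvd_sSup_colSet hm0 (Set.inter_subset_left (t := S₂)) ⟨h1S₁, h1S₂⟩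
      (fun a ha b hb => ⟨lcm_mem_colSet hm0 ha.1 hb.1, lcm_mem_colSet hm0 ha.2 hb.2⟩)
      ⟨hg₁, hg₂⟩
end

section
/- Let T be an m-uniform hypertree. Then c(T) = m; that is, there exists a vertex coloring φ : V(T) → ℤ/mℤ such that the φ-values on each edge sum to 1 mod m. -/
open Matrix

section Aux
set_option linter.unusedSectionVars false

variable {m : ℕ} {V : Type} [DecidableEq V] [Fintype V]

def IsPathLen (E : Finset (Finset V)) (t : ℕ) : Prop :=
  ∃ v : ℕ → V, ∃ e : ℕ → Finset V,
    (∀ i, i < t → e i ∈ E) ∧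
    (∀ i, i < t → v i ∈ e i ∧ v (i+1) ∈ e i ∧ v i ≠ v (i+1)) ∧
    (∀ i j, i ≤ t → j ≤ t → v i = v j → i = j) ∧
    (∀ i j, i < t → j < t → e i = e j → i = j)

lemma hasCycle_of (E : Finset (Finset V)) (hu : ∀ e ∈ E, e.card = m) (t : ℕ) (ht : 2 ≤ t)
    (v : ℕ → V) (e : ℕ → Finset V)
    (he : ∀ i, i < t → e i ∈ E)
    (hve : ∀ i, i < t → v i ∈ e i ∧ v (i+1) ∈ e i ∧ v i ≠ v (i+1))
    (hclose : v t = v 0)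
    (hvinj : ∀ i j, i < t → j < t → v i = v j → i = j)
    (heinj : ∀ i j, i < t → j < t → e i = e j → i = j) :
    HG.HasCycle (⟨E, hu⟩ : HG m V) := by
  refine ⟨t, ht, fun i => v i.val, fun i => e i.val, fun i => he i.val i.isLt, ?_, ?_, ?_, ?_⟩
  · intro i
    have h := hve i.val i.isLt
    simpa using h
  · simpa using hclose
  · intro i j hij
    exact Fin.ext (hvinj i.val j.val i.isLt j.isLt (by simpa using hij))
  · intro i j hij
    exact Fin.ext (heinj i.val j.val i.isLt j.isLt hij)

lemma exists_private (hm : 2 ≤ m) (E : Finset (Finset V)) (hu : ∀ e ∈ E, e.card = m)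
    (hE : E.Nonempty) (hacyc : ¬ HG.HasCycle (⟨E, hu⟩ : HG m V)) :
    ∃ e ∈ E, ∃ w ∈ e, ∀ f ∈ E, f ≠ e → w ∉ f := by
  by_contra hcon
  push_neg at hcon
  -- hcon : ∀ e ∈ E, ∀ w ∈ e, ∃ f ∈ E, f ≠ e ∧ w ∈ f
  set S : Set ℕ := {t : ℕ | 1 ≤ t ∧ IsPathLen E t} with hS
  have hbdd : BddAbove S := by
    refine ⟨Fintype.card V, fun t ht => ?_⟩
    obtain ⟨-, v, e, -, -, hvinj, -⟩ := ht
    have h1 : (Finset.range (t+1)).card ≤ Fintype.card V := by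
      apply Finset.card_le_card_of_injOn v (fun i _ => Finset.mem_univ _)
      intro i hi j hj hij
      exact hvinj i j (by simpa using Nat.lt_succ_iff.mp (Finset.mem_range.mp hi))
        (by simpa using Nat.lt_succ_iff.mp (Finset.mem_range.mp hj)) hij
    simp only [Finset.card_range] at h1
    omega
  have hne : S.Nonempty := by
    obtain ⟨e₀, he₀⟩ := hE
    have hcard : 1 < e₀.card := by rw [hu e₀ he₀]; omega
    have hpos : 0 < e₀.card := by omega
    obtain ⟨a, ha⟩ := Finset.card_pos.mp hpos
    obtain ⟨b, hb, hba⟩ := Finset.exists_mem_ne hcard a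
    refine ⟨1, le_refl 1, fun i => if i = 0 then a else b, fun _ => e₀, ?_, ?_, ?_, ?_⟩
    · intro i _; exact he₀
    · intro i hi
      have hi0 : i = 0 := by omega
      subst hi0
      dsimp only
      rw [if_pos rfl, if_neg (show 0+1 ≠ 0 by omega)]
      exact ⟨ha, hb, Ne.symm hba⟩
    · intro i j hi hj hij
      dsimp only at hij
      by_cases h1 : i = 0 <;> by_cases h2 : j = 0
      · omega
      · rw [if_pos h1, if_neg h2] at hij; exact absurd hij.symm hba
      · rw [if_neg h1, if_pos h2] at hij; exact absurd hij hba
      · omega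
    · intro i j hi hj _; omega
  set t := sSup S with htdef
  have htS : t ∈ S := Nat.sSup_mem hne hbdd
  have hmax : ∀ s ∈ S, s ≤ t := fun s hs => le_csSup hbdd hs
  obtain ⟨ht1, v, e, he, hve, hvinj, heinj⟩ := htS
  have hstep := hve (t-1) (by omega)
  have hxe : v t ∈ e (t-1) := by
    have h := hstep.2.1
    rwa [show t-1+1 = t by omega] at h
  obtain ⟨f, hfE, hfne, hxf⟩ := hcon (e (t-1)) (he _ (by omega)) (v t) hxe
  by_cases hA : ∃ j, j < t ∧ e j = f
  · -- f is an earlier edge: close up a cycle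
    obtain ⟨j, hj, hej⟩ := hA
    have hjne : j ≠ t - 1 := by
      intro h; subst h; exact hfne hej.symm
    have hjlt : j < t - 1 := by omega
    set t' := t - j with ht'
    apply hacyc
    apply hasCycle_of E hu t' (by omega)
      (fun i => if i = t' then v (j+1) else v (j+1+i))
      (fun i => if i = t'-1 then e j else e (j+1+i))
    · intro i hi
      by_cases h1 : i = t'-1
      · rw [if_pos h1]; exact he j (by omega)
      · rw [if_neg h1]; exact he (j+1+i) (by omega)
    · intro i hi
      by_cases h1 : i = t'-1
      · subst h1
        rw [if_neg (by omega : t'-1 ≠ t'), if_pos rfl,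
          show t'-1+1 = t' by omega, if_pos rfl,
          show j+1+(t'-1) = t by omega]
        refine ⟨hej ▸ hxf, (hve j (by omega)).2.1, ?_⟩
        intro hEq
        have := hvinj t (j+1) (le_refl t) (by omega) hEq
        omega
      · rw [if_neg h1, if_neg (by omega : i ≠ t'), if_neg (by omega : i + 1 ≠ t'),
          show j+1+(i+1) = (j+1+i)+1 by omega]
        exact hve (j+1+i) (by omega)
    · rw [if_pos rfl, if_neg (by omega : (0:ℕ) ≠ t')]
    · intro i i' hi hi' hEq
      rw [if_neg (by omega : i ≠ t'), if_neg (by omega : i' ≠ t')] at hEq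
      have := hvinj (j+1+i) (j+1+i') (by omega) (by omega) hEq
      omega
    · intro i i' hi hi' hEq
      by_cases h1 : i = t'-1 <;> by_cases h2 : i' = t'-1
      · omega
      · rw [if_pos h1, if_neg h2] at hEq
        have := heinj j (j+1+i') (by omega) (by omega) hEq
        omega
      · rw [if_neg h1, if_pos h2] at hEq
        have := heinj (j+1+i) j (by omega) (by omega) hEq
        omega
      · rw [if_neg h1, if_neg h2] at hEq
        have := heinj (j+1+i) (j+1+i') (by omega) (by omega) hEq
        omega
  · push_neg at hA
    -- f is a new edge; it has a vertex y ≠ v t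
    have hfcard : 1 < f.card := by rw [hu f hfE]; omega
    obtain ⟨y, hyf, hyx⟩ := Finset.exists_mem_ne hfcard (v t)
    by_cases hB : ∃ j, j ≤ t ∧ v j = y
    · -- y is on the path: cycle
      obtain ⟨j, hj, hvj⟩ := hB
      have hjt : j < t := by
        rcases Nat.lt_or_ge j t with h | h
        · exact h
        · exfalso; apply hyx; rw [← hvj]; congr 1; omega
      set t' := t - j + 1 with ht'
      apply hacyc
      apply hasCycle_of E hu t' (by omega)
        (fun i => if i = t' then v j else v (j+i))
        (fun i => if i = t'-1 then f else e (j+i))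
      · intro i hi
        by_cases h1 : i = t'-1
        · rw [if_pos h1]; exact hfE
        · rw [if_neg h1]; exact he (j+i) (by omega)
      · intro i hi
        by_cases h1 : i = t'-1
        · subst h1
          rw [if_neg (by omega : t'-1 ≠ t'), if_pos rfl,
            show t'-1+1 = t' by omega, if_pos rfl,
            show j+(t'-1) = t by omega]
          exact ⟨hxf, hvj ▸ hyf, fun hEq => hyx (hEq ▸ hvj ▸ rfl)⟩
        · rw [if_neg h1, if_neg (by omega : i ≠ t'), if_neg (by omega : i + 1 ≠ t'),
            show j+(i+1) = (j+i)+1 by omega]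
          exact hve (j+i) (by omega)
      · rw [if_pos rfl, if_neg (by omega : (0:ℕ) ≠ t'), Nat.add_zero]
      · intro i i' hi hi' hEq
        rw [if_neg (by omega : i ≠ t'), if_neg (by omega : i' ≠ t')] at hEq
        have := hvinj (j+i) (j+i') (by omega) (by omega) hEq
        omega
      · intro i i' hi hi' hEq
        by_cases h1 : i = t'-1 <;> by_cases h2 : i' = t'-1
        · omega
        · rw [if_pos h1, if_neg h2] at hEq
          exact absurd hEq.symm (hA (j+i') (by omega))
        · rw [if_neg h1, if_pos h2] at hEq
          exact absurd hEq (hA (j+i) (by omega))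
        · rw [if_neg h1, if_neg h2] at hEq
          have := heinj (j+i) (j+i') (by omega) (by omega) hEq
          omega
    · -- extend the path, contradicting maximality
      push_neg at hB
      have hS1 : (t + 1) ∈ S := by
        refine ⟨by omega, fun i => if i = t+1 then y else v i, fun i => if i = t then f else e i,
          ?_, ?_, ?_, ?_⟩
        · intro i hi
          dsimp only
          by_cases h1 : i = t
          · rw [if_pos h1]; exact hfE
          · rw [if_neg h1]; exact he i (by omega)
        · intro i hi
          dsimp only
          by_cases h1 : i = t
          · subst h1
            rw [if_neg (by omega : t ≠ t+1), if_pos rfl, if_pos rfl]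
            exact ⟨hxf, hyf, fun hEq => hyx hEq.symm⟩
          · rw [if_neg h1, if_neg (by omega : i ≠ t+1), if_neg (by omega : i+1 ≠ t+1)]
            exact hve i (by omega)
        · intro i i' hi hi' hEq
          dsimp only at hEq
          by_cases h1 : i = t+1 <;> by_cases h2 : i' = t+1
          · omega
          · rw [if_pos h1, if_neg h2] at hEq
            exact absurd hEq.symm (hB i' (by omega))
          · rw [if_neg h1, if_pos h2] at hEq
            exact absurd hEq (hB i (by omega))
          · rw [if_neg h1, if_neg h2] at hEq
            exact hvinj i i' (by omega) (by omega) hEq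
        · intro i i' hi hi' hEq
          dsimp only at hEq
          by_cases h1 : i = t <;> by_cases h2 : i' = t
          · omega
          · rw [if_pos h1, if_neg h2] at hEq
            exact absurd hEq.symm (hA i' (by omega))
          · rw [if_neg h1, if_pos h2] at hEq
            exact absurd hEq (hA i (by omega))
          · rw [if_neg h1, if_neg h2] at hEq
            exact heinj i i' (by omega) (by omega) hEq
      have := hmax (t+1) hS1
      omega


lemma hasCycle_mono {m : ℕ} {V : Type} {E E' : Finset (Finset V)} (h : E' ⊆ E)
    (hu : ∀ e ∈ E, e.card = m) (hu' : ∀ e ∈ E', e.card = m) :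
    HG.HasCycle (⟨E', hu'⟩ : HG m V) → HG.HasCycle (⟨E, hu⟩ : HG m V) := by
  rintro ⟨t, ht, v, e, he, h2, h3, h4, h5⟩
  exact ⟨t, ht, v, e, fun i => h (he i), h2, h3, h4, h5⟩

lemma exists_coloring {m : ℕ} {V : Type} [DecidableEq V] [Fintype V] (hm : 2 ≤ m) :
    ∀ n (E : Finset (Finset V)), E.card ≤ n → ∀ (hu : ∀ e ∈ E, e.card = m),
      ¬ HG.HasCycle (⟨E, hu⟩ : HG m V) →
      ∃ φ : V → ZMod m, ∀ e ∈ E, ∑ x ∈ e, φ x = 1 := by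
  intro n
  induction n with
  | zero =>
    intro E hE hu _
    rw [Nat.le_zero, Finset.card_eq_zero] at hE
    subst hE
    exact ⟨0, fun e he => absurd he (Finset.notMem_empty e)⟩
  | succ n ih =>
    intro E hE hu hacyc
    rcases E.eq_empty_or_nonempty with rfl | hne
    · exact ⟨0, fun e he => absurd he (Finset.notMem_empty e)⟩
    · obtain ⟨e, heE, w, hwe, hpriv⟩ := exists_private hm E hu hne hacyc
      set E' := E.erase e with hE'
      have hu' : ∀ f ∈ E', f.card = m := fun f hf => hu f (Finset.mem_of_mem_erase hf)
      have hacyc' : ¬ HG.HasCycle (⟨E', hu'⟩ : HG m V) :=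
        fun h => hacyc (hasCycle_mono (Finset.erase_subset _ _) hu hu' h)
      have hcard : E'.card ≤ n := by
        rw [hE', Finset.card_erase_of_mem heE]
        have h2 := Finset.card_pos.mpr hne
        omega
      obtain ⟨φ', hφ'⟩ := ih E' hcard hu' hacyc'
      refine ⟨Function.update φ' w (1 - ∑ x ∈ e.erase w, φ' x), ?_⟩
      intro f hf
      by_cases hfe : f = e
      · subst hfe
        rw [Finset.sum_update_of_mem hwe, Finset.sdiff_singleton_eq_erase]
        ring
      · have hwf : w ∉ f := hpriv f hf hfe
        have hupd : ∀ x ∈ f, Function.update φ' w (1 - ∑ x ∈ e.erase w, φ' x) x = φ' x := by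
          intro x hx
          apply Function.update_of_ne
          rintro rfl
          exact hwf hx
        rw [Finset.sum_congr rfl hupd]
        exact hφ' f (Finset.mem_erase.mpr ⟨hfe, hf⟩)

end Aux

/-- **Cyclic index of a hypertree.** An `m`-uniform hypertree `T` (connected and acyclic)
has cyclic index `m`; that is, there is a vertex coloring `φ : V(T) → ZMod m` whose values
sum to `1` mod `m` on each edge. -/
theorem cyclicIndex_hypertree (m : ℕ) (hm : 2 ≤ m) {V : Type} [DecidableEq V] [Fintype V]
    (T : HG m V) (hconn : T.Connected) (hacyc : ¬ T.HasCycle) :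
    T.cyclicIndex = m ∧ ∃ φ : V → ZMod m, ∀ e ∈ T.edges, ∑ v ∈ e, φ v = 1 := by
  have hmpos : 0 < m := by omega
  obtain ⟨φ, hφ⟩ := exists_coloring hm T.edges.card T.edges (le_refl _) T.uniform hacyc
  refine ⟨?_, φ, hφ⟩
  have hbd : ∀ ℓ ∈ {ℓ : ℕ | ℓ ∣ m ∧ ∃ x : V → ZMod m,
      ∀ e ∈ T.edges, ∑ v ∈ e, x v = ((m / ℓ : ℕ) : ZMod m)}, ℓ ≤ m :=
    fun ℓ hℓ => Nat.le_of_dvd hmpos hℓ.1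
  have hmem : m ∈ {ℓ : ℕ | ℓ ∣ m ∧ ∃ x : V → ZMod m,
      ∀ e ∈ T.edges, ∑ v ∈ e, x v = ((m / ℓ : ℕ) : ZMod m)} := by
    refine ⟨dvd_refl m, φ, fun e he => ?_⟩
    rw [Nat.div_self hmpos, Nat.cast_one]
    exact hφ e he
  exact le_antisymm (csSup_le ⟨m, hmem⟩ hbd) (le_csSup ⟨m, hbd⟩ hmem)
end
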